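/- Let K be a field and let S and T be nonempty finite sets of valuation subrings of K, each of which consists of pairwise incomparable valuation subrings. If the intersection of all members of S equals the intersection of all members of T (as subrings of K), then S = T. In particular, a multi-valuation ring on K can be written in a unique way as an intersection of finitely many pairwise incomparable valuation subrings. -/

import Mathlib

namespace MVDecomp

open scoped Classical

variable {K : Type*} [Field K]

private lemma gz_inv_lt_one {α : Type*} [LinearOrderedCommGroupWithZero α] {g : α}
    (h : 1 < g) : g⁻¹ < 1 := by
  have hg : g ≠ 0 := (zero_lt_one.trans h).ne'
  have h2 : g⁻¹ * 1 < g⁻¹ * g := mul_lt_mul_of_pos_left h (zero_lt_iff.2 (inv_ne_zero hg))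
  rwa [mul_one, inv_mul_cancel₀ hg] at h2

private lemma mvT_nobad (F : Finset (ValuationSubring K)) (d : K) (hd : d ≠ 0)
    (h1 : 1 + d ≠ 0)
    (hnb : ∀ C ∈ F, C.valuation d = 1 → C.valuation (1 + d) = 1) :
    ∃ t : K, t ≠ 0 ∧ ∀ C ∈ F,
      (1 < C.valuation d → C.valuation t = 1) ∧
      (C.valuation d = 1 → C.valuation t ≤ 1) ∧
      (C.valuation d < 1 → C.valuation t = C.valuation d) := by
  refine ⟨d * (1 + d)⁻¹, mul_ne_zero hd (inv_ne_zero h1), ?_⟩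
  intro C hC
  have hvd0 : C.valuation d ≠ 0 := (Valuation.ne_zero_iff _).2 hd
  have hv1 : C.valuation (1 : K) = 1 := map_one _
  have hvt : C.valuation (d * (1 + d)⁻¹) = C.valuation d * (C.valuation (1 + d))⁻¹ := by
    rw [map_mul, Valuation.map_inv]
  refine ⟨?_, ?_, ?_⟩
  · intro h
    have hne : C.valuation (1 : K) ≠ C.valuation d := by rw [hv1]; exact h.ne
    have h2 : C.valuation (1 + d) = C.valuation d := by
      rw [Valuation.map_add_of_distinct_val _ hne, hv1, max_eq_right h.le]
    rw [hvt, h2, mul_inv_cancel₀ hvd0]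
  · intro h
    have h2 := hnb C hC h
    rw [hvt, h, h2, inv_one, mul_one]
  · intro h
    have hne : C.valuation (1 : K) ≠ C.valuation d := by rw [hv1]; exact h.ne'
    have h2 : C.valuation (1 + d) = 1 := by
      rw [Valuation.map_add_of_distinct_val _ hne, hv1, max_eq_left h.le]
    rw [hvt, h2, inv_one, mul_one]

private lemma mvT (F : Finset (ValuationSubring K)) :
    ∀ (m : ℕ) (d : K), d ≠ 0 → (F.filter (fun C => C.valuation d = 1)).card ≤ m →
      ∃ t : K, t ≠ 0 ∧ ∀ C ∈ F,
        (1 < C.valuation d → C.valuation t = 1) ∧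
        (C.valuation d = 1 → C.valuation t ≤ 1) ∧
        (C.valuation d < 1 → C.valuation t = C.valuation d) := by
  have hm1 : ∀ (d : K), 1 + d = 0 → ∃ t : K, t ≠ 0 ∧ ∀ C ∈ F,
      (1 < C.valuation d → C.valuation t = 1) ∧
      (C.valuation d = 1 → C.valuation t ≤ 1) ∧
      (C.valuation d < 1 → C.valuation t = C.valuation d) := by
    intro d h1
    have hd : d = -1 := by linear_combination h1
    subst hd
    refine ⟨1, one_ne_zero, ?_⟩
    intro C _
    have hv : C.valuation (-1 : K) = 1 := by rw [Valuation.map_neg, map_one]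
    rw [hv]
    exact ⟨fun h => absurd h (lt_irrefl _), fun _ => le_of_eq (map_one _),
      fun h => absurd h (lt_irrefl _)⟩
  intro m
  induction m with
  | zero =>
    intro d hd hcard
    by_cases h1 : 1 + d = 0
    · exact hm1 d h1
    refine mvT_nobad F d hd h1 ?_
    intro C hC hCd
    exfalso
    have : C ∈ F.filter (fun C => C.valuation d = 1) := Finset.mem_filter.2 ⟨hC, hCd⟩
    have := Finset.card_pos.2 ⟨C, this⟩
    omega
  | succ m ih =>
    intro d hd hcard
    by_cases h1 : 1 + d = 0
    · exact hm1 d h1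
    by_cases hbad : ∀ C ∈ F, C.valuation d = 1 → C.valuation (1 + d) = 1
    · exact mvT_nobad F d hd h1 hbad
    push_neg at hbad
    obtain ⟨C₀, hC₀F, hC₀d, hC₀ne⟩ := hbad
    have hC₀lt : C₀.valuation (1 + d) < 1 := by
      have hle : C₀.valuation (1 + d) ≤ max (C₀.valuation 1) (C₀.valuation d) :=
        Valuation.map_add _ _ _
      rw [map_one, hC₀d, max_self] at hle
      exact lt_of_le_of_ne hle hC₀ne
    set δ := d * (1 + d) with hδ
    have hδne : δ ≠ 0 := mul_ne_zero hd h1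
    -- per-ring facts
    have fgt : ∀ C : ValuationSubring K, 1 < C.valuation d → 1 < C.valuation δ := by
      intro C h
      have hne : C.valuation (1 : K) ≠ C.valuation d := by rw [map_one]; exact h.ne
      have h2 : C.valuation (1 + d) = C.valuation d := by
        rw [Valuation.map_add_of_distinct_val _ hne, map_one, max_eq_right h.le]
      have : (1 : C.ValueGroup) * 1 < C.valuation d * C.valuation d :=
        lt_of_lt_of_le (mul_lt_mul_of_pos_right h zero_lt_one) (mul_le_mul_right h.le _)
      rw [one_mul] at this
      rw [hδ, map_mul, h2]
      exact this
    have feq : ∀ C : ValuationSubring K, C.valuation d = 1 →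
        C.valuation δ = C.valuation (1 + d) ∧ C.valuation δ ≤ 1 := by
      intro C h
      have h2 : C.valuation δ = C.valuation (1 + d) := by
        rw [hδ, map_mul, h, one_mul]
      have hle : C.valuation (1 + d) ≤ max (C.valuation 1) (C.valuation d) :=
        Valuation.map_add _ _ _
      rw [map_one, h, max_self] at hle
      exact ⟨h2, h2.le.trans hle⟩
    have flt : ∀ C : ValuationSubring K, C.valuation d < 1 → C.valuation δ = C.valuation d := by
      intro C h
      have hne : C.valuation (1 : K) ≠ C.valuation d := by rw [map_one]; exact h.ne'
      have h2 : C.valuation (1 + d) = 1 := by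
        rw [Valuation.map_add_of_distinct_val _ hne, map_one, max_eq_left h.le]
      rw [hδ, map_mul, h2, mul_one]
    -- cardinality decrease
    have hsub : F.filter (fun C => C.valuation δ = 1) ⊆
        (F.filter (fun C => C.valuation d = 1)).erase C₀ := by
      intro C hC
      obtain ⟨hCF, hCδ⟩ := Finset.mem_filter.1 hC
      have hCd : C.valuation d = 1 := by
        rcases lt_trichotomy (C.valuation d) 1 with h | h | h
        · exact absurd hCδ (by rw [flt C h]; exact h.ne)
        · exact h
        · exact absurd hCδ (by exact (fgt C h).ne')
      refine Finset.mem_erase.2 ⟨?_, Finset.mem_filter.2 ⟨hCF, hCd⟩⟩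
      rintro rfl
      rw [(feq C hC₀d).1] at hCδ
      exact hC₀lt.ne hCδ
    have hcard' : (F.filter (fun C => C.valuation δ = 1)).card ≤ m := by
      have h2 := Finset.card_le_card hsub
      rw [Finset.card_erase_of_mem
        (Finset.mem_filter.2 ⟨hC₀F, hC₀d⟩)] at h2
      omega
    obtain ⟨t, htne, ht⟩ := ih δ hδne hcard'
    refine ⟨t, htne, ?_⟩
    intro C hC
    obtain ⟨g1, g2, g3⟩ := ht C hC
    refine ⟨?_, ?_, ?_⟩
    · intro h
      exact g1 (fgt C h)
    · intro h
      obtain ⟨-, hle⟩ := feq C h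
      rcases lt_or_eq_of_le hle with hlt | heq
      · rw [g3 hlt]; exact hlt.le
      · exact g2 heq
    · intro h
      have e : C.valuation δ = C.valuation d := flt C h
      rw [← e]
      exact g3 (by rw [e]; exact h)

private lemma gz_one_lt_inv {α : Type*} [LinearOrderedCommGroupWithZero α] {g : α}
    (h0 : g ≠ 0) (h : g < 1) : 1 < g⁻¹ := by
  have h2 : g⁻¹ * g < g⁻¹ * 1 := mul_lt_mul_of_pos_left h (zero_lt_iff.2 (inv_ne_zero h0))
  rwa [inv_mul_cancel₀ h0, mul_one] at h2

private def interSubring (S : Finset (ValuationSubring K)) : Subring K where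
  carrier := {x : K | ∀ A ∈ S, x ∈ A}
  zero_mem' := fun A _ => A.zero_mem
  one_mem' := fun A _ => A.one_mem
  add_mem' := fun hx hy A hA => A.add_mem _ _ (hx A hA) (hy A hA)
  mul_mem' := fun hx hy A hA => A.mul_mem _ _ (hx A hA) (hy A hA)
  neg_mem' := fun hx A hA => A.neg_mem _ (hx A hA)

private lemma mem_interSubring {S : Finset (ValuationSubring K)} {x : K} :
    x ∈ interSubring S ↔ ∀ A ∈ S, x ∈ A := Iff.rfl

private def mvIdeal (S : Finset (ValuationSubring K)) (W : ValuationSubring K) :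
    Ideal (interSubring S) where
  carrier := {x : interSubring S | ∀ r : interSubring S, W.valuation ((r : K) * (x : K)) < 1}
  zero_mem' := by
    intro r
    show W.valuation ((r : K) * ((0 : interSubring S) : K)) < 1
    rw [show ((0 : interSubring S) : K) = 0 from rfl, mul_zero, map_zero]
    exact zero_lt_one
  add_mem' := by
    intro x y hx hy r
    show W.valuation ((r : K) * ((x + y : interSubring S) : K)) < 1
    have : ((x + y : interSubring S) : K) = (x : K) + (y : K) := rfl
    rw [this, mul_add]
    exact lt_of_le_of_lt (Valuation.map_add _ _ _) (max_lt (hx r) (hy r))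
  smul_mem' := by
    intro c x hx r
    show W.valuation ((r : K) * ((c • x : interSubring S) : K)) < 1
    have : ((c • x : interSubring S) : K) = (c : K) * (x : K) := rfl
    rw [this, ← mul_assoc]
    exact hx (r * c)

private lemma mem_mvIdeal {S : Finset (ValuationSubring K)} {W : ValuationSubring K}
    (hW : ∀ x : K, x ∈ interSubring S → x ∈ W) (x : interSubring S) :
    x ∈ mvIdeal S W ↔ W.valuation (x : K) < 1 := by
  constructor
  · intro hx
    have := hx 1
    rwa [show ((1 : interSubring S) : K) = 1 from rfl, one_mul] at this
  · intro hx r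
    have hr : W.valuation (r : K) ≤ 1 := (W.valuation_le_one_iff _).2 (hW _ r.2)
    calc W.valuation ((r : K) * (x : K)) = W.valuation (r : K) * W.valuation (x : K) :=
          map_mul _ _ _
      _ ≤ 1 * W.valuation (x : K) := mul_le_mul_left hr _
      _ = W.valuation (x : K) := one_mul _
      _ < 1 := hx

private lemma mvIdeal_prime {S : Finset (ValuationSubring K)} {A : ValuationSubring K}
    (hA : A ∈ S) : (mvIdeal S A).IsPrime := by
  have hW : ∀ x : K, x ∈ interSubring S → x ∈ A := fun x hx => hx A hA
  constructor
  · rw [Ideal.ne_top_iff_one, mem_mvIdeal hW]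
    rw [show (((1 : interSubring S)) : K) = 1 from rfl, map_one]
    exact lt_irrefl _
  · intro x y hxy
    rw [mem_mvIdeal hW] at hxy ⊢
    rw [mem_mvIdeal hW]
    by_contra hc
    push_neg at hc
    obtain ⟨hx, hy⟩ := hc
    have hx1 : A.valuation (x : K) = 1 :=
      le_antisymm ((A.valuation_le_one_iff _).2 (hW _ x.2)) hx
    have hy1 : A.valuation (y : K) = 1 :=
      le_antisymm ((A.valuation_le_one_iff _).2 (hW _ y.2)) hy
    have : ((x * y : interSubring S) : K) = (x : K) * (y : K) := rfl
    rw [this, map_mul, hx1, hy1, mul_one] at hxy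
    exact lt_irrefl _ hxy

private lemma mv_key : ∀ (n : ℕ) (S : Finset (ValuationSubring K)), S.card ≤ n →
    S.Nonempty → ∀ V : ValuationSubring K,
    (∀ x : K, (∀ A ∈ S, x ∈ A) → x ∈ V) → ∃ A ∈ S, A ≤ V := by
  intro n
  induction n with
  | zero =>
    intro S hcard hne
    have := Finset.card_pos.2 hne
    omega
  | succ n ih =>
    intro S hcard hne V hsub
    by_contra hno
    push_neg at hno
    -- hno : ∀ A ∈ S, ¬ A ≤ V
    have hD : ∀ A ∈ S, ∃ d : K, (∀ B ∈ S.erase A, d ∈ B) ∧ d ∉ V := by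
      intro A hA
      by_contra hc
      push_neg at hc
      rcases Finset.eq_empty_or_nonempty (S.erase A) with he | hne'
      · exact hno A hA (fun x hx => hc x (by simp [he]))
      · have hcard' : (S.erase A).card ≤ n := by
          have := Finset.card_erase_of_mem hA
          have := Finset.card_pos.2 hne
          omega
        obtain ⟨B, hB, hBV⟩ := ih (S.erase A) hcard' hne' V (fun x hx => hc x hx)
        exact hno B (Finset.mem_of_mem_erase hB) hBV
    have hsub' : ∀ x : K, x ∈ interSubring S → x ∈ V :=
      fun x hx => hsub x (mem_interSubring.1 hx)
    have havoid : ((mvIdeal S V : Ideal (interSubring S)) : Set (interSubring S)) ⊆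
        ⋃ A ∈ (S : Set (ValuationSubring K)), ((mvIdeal S A : Ideal (interSubring S))
          : Set (interSubring S)) := by
      intro x hx
      rw [SetLike.mem_coe, mem_mvIdeal hsub'] at hx
      have hxD : ∀ A ∈ S, (x : K) ∈ A := mem_interSubring.1 x.2
      have hmem : ∃ A ∈ S, x ∈ mvIdeal S A := by
        by_contra hc
        push_neg at hc
        have hall : ∀ A ∈ S, A.valuation (x : K) = 1 := by
          intro A hA
          have h2 := hc A hA
          rw [mem_mvIdeal (fun y hy => mem_interSubring.1 hy A hA)] at h2
          exact le_antisymm ((A.valuation_le_one_iff _).2 (hxD A hA)) (not_lt.1 h2)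
        obtain ⟨A₀, hA₀⟩ := hne
        have hx0 : (x : K) ≠ 0 := by
          intro h0
          have h2 := hall A₀ hA₀
          rw [h0, map_zero] at h2
          exact zero_ne_one h2
        have hinv : (x : K)⁻¹ ∈ V := by
          apply hsub
          intro A hA
          rw [← A.valuation_le_one_iff, Valuation.map_inv, hall A hA, inv_one]
        have hVle : V.valuation (x : K)⁻¹ ≤ 1 := (V.valuation_le_one_iff _).2 hinv
        have hlt : (1 : V.ValueGroup) < 1 := by
          calc (1 : V.ValueGroup) = V.valuation ((x : K) * (x : K)⁻¹) := by
                rw [mul_inv_cancel₀ hx0, map_one]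
            _ = V.valuation (x : K) * V.valuation (x : K)⁻¹ := map_mul _ _ _
            _ ≤ V.valuation (x : K) * 1 := mul_le_mul_right hVle _
            _ = V.valuation (x : K) := mul_one _
            _ < 1 := hx
        exact lt_irrefl _ hlt
      obtain ⟨A, hA, hxA⟩ := hmem
      exact Set.mem_biUnion hA hxA
    obtain ⟨A, hAS, hPQ⟩ := (Ideal.subset_union_prime (R := interSubring S) V V
        (fun i hi _ _ => mvIdeal_prime hi)).1 havoid
    have hWA : ∀ x : K, x ∈ interSubring S → x ∈ A :=
      fun x hx => mem_interSubring.1 hx A hAS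
    obtain ⟨d, hdB, hdV⟩ := hD A hAS
    have hdA : d ∉ A := by
      intro hdA'
      refine hdV (hsub d (fun B hB => ?_))
      rcases eq_or_ne B A with rfl | hBA
      · exact hdA'
      · exact hdB B (Finset.mem_erase.2 ⟨hBA, hB⟩)
    have hd0 : d ≠ 0 := fun h => hdV (h ▸ V.zero_mem)
    have hvAd : 1 < A.valuation d :=
      lt_of_not_ge (fun h => hdA ((A.valuation_le_one_iff _).1 h))
    have hvVd : 1 < V.valuation d :=
      lt_of_not_ge (fun h => hdV ((V.valuation_le_one_iff _).1 h))
    have final : ∀ t : K, (∀ B ∈ S, t ∈ B) → V.valuation t < 1 →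
        A.valuation t = 1 → False := by
      intro t htB htV htA
      have hxD : t ∈ interSubring S := mem_interSubring.2 htB
      have hxP : (⟨t, hxD⟩ : interSubring S) ∈ mvIdeal S V := by
        rw [mem_mvIdeal hsub']
        exact htV
      have h2 := hPQ hxP
      rw [mem_mvIdeal hWA] at h2
      rw [htA] at h2
      exact lt_irrefl _ h2
    by_cases hb : ∃ a : K, a ∈ A ∧ a ∉ V ∧ a⁻¹ ∉ A
    · -- branch 1
      obtain ⟨a, haA, haV, haiA⟩ := hb
      have ha0 : a ≠ 0 := fun h => haV (h ▸ V.zero_mem)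
      have hvAa : 1 < A.valuation a⁻¹ :=
        lt_of_not_ge (fun h => haiA ((A.valuation_le_one_iff _).1 h))
      have hvVa : 1 < V.valuation a :=
        lt_of_not_ge (fun h => haV ((V.valuation_le_one_iff _).1 h))
      have hvVai : V.valuation a⁻¹ < 1 := by
        rw [Valuation.map_inv]
        exact gz_inv_lt_one hvVa
      obtain ⟨t, ht0, ht⟩ := mvT (insert V S)
        (((insert V S).filter (fun C => C.valuation a⁻¹ = 1)).card) a⁻¹
        (inv_ne_zero ha0) le_rfl
      obtain ⟨hA1, -, -⟩ := ht A (Finset.mem_insert_of_mem hAS)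
      obtain ⟨-, -, hV3⟩ := ht V (Finset.mem_insert_self _ _)
      refine final t ?_ ?_ (hA1 hvAa)
      · intro B hB
        obtain ⟨g1, g2, g3⟩ := ht B (Finset.mem_insert_of_mem hB)
        rw [← B.valuation_le_one_iff]
        rcases lt_trichotomy (B.valuation a⁻¹) 1 with hlt | heq | hgt
        · rw [g3 hlt]; exact hlt.le
        · exact g2 heq
        · rw [g1 hgt]
      · rw [hV3 hvVai]
        exact hvVai
    · -- branch 2
      push_neg at hb
      -- hb : ∀ a, a ∈ A → a ∉ V → a⁻¹ ∈ A
      obtain ⟨a₀, ha₀A, ha₀V⟩ := SetLike.not_le_iff_exists.1 (hno A hAS)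
      have ha₀0 : a₀ ≠ 0 := fun h => ha₀V (h ▸ V.zero_mem)
      have ha₀i : a₀⁻¹ ∈ A := hb a₀ ha₀A ha₀V
      have hvAa₀ : A.valuation a₀ = 1 := by
        refine le_antisymm ((A.valuation_le_one_iff _).2 ha₀A) ?_
        have h2 : A.valuation a₀⁻¹ ≤ 1 := (A.valuation_le_one_iff _).2 ha₀i
        rw [Valuation.map_inv] at h2
        by_contra hc
        push_neg at hc
        exact absurd (gz_one_lt_inv ((Valuation.ne_zero_iff _).2 ha₀0) hc) (not_lt.2 h2)
      have hvVa₀ : 1 < V.valuation a₀ :=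
        lt_of_not_ge (fun h => ha₀V ((V.valuation_le_one_iff _).1 h))
      -- u := d * a₀
      set u : K := d * a₀ with hu
      have hu0 : u ≠ 0 := mul_ne_zero hd0 ha₀0
      have hvAu : 1 < A.valuation u := by
        rw [hu, map_mul, hvAa₀, mul_one]
        exact hvAd
      have hvVu : 1 < V.valuation u := by
        rw [hu, map_mul]
        calc (1 : V.ValueGroup) < V.valuation d := hvVd
          _ = V.valuation d * 1 := (mul_one _).symm
          _ ≤ V.valuation d * V.valuation a₀ := mul_le_mul_right hvVa₀.le _
      obtain ⟨t₀, ht₀0, ht₀⟩ := mvT (insert V S)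
        (((insert V S).filter (fun C => C.valuation u = 1)).card) u hu0 le_rfl
      obtain ⟨hA1, -, -⟩ := ht₀ A (Finset.mem_insert_of_mem hAS)
      obtain ⟨hV1, -, -⟩ := ht₀ V (Finset.mem_insert_self _ _)
      -- final element t := a₀⁻¹ * t₀
      refine final (a₀⁻¹ * t₀) ?_ ?_ ?_
      · intro B hB
        obtain ⟨g1, g2, g3⟩ := ht₀ B (Finset.mem_insert_of_mem hB)
        have hα0 : B.valuation a₀ ≠ 0 := (Valuation.ne_zero_iff _).2 ha₀0
        have hvmul : B.valuation (a₀⁻¹ * t₀) = (B.valuation a₀)⁻¹ * B.valuation t₀ := by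
          rw [map_mul, Valuation.map_inv]
        rw [← B.valuation_le_one_iff, hvmul]
        rcases eq_or_ne B A with rfl | hBA
        · rw [hvAa₀, inv_one, one_mul, hA1 hvAu]
        have hvBd : B.valuation d ≤ 1 :=
          (B.valuation_le_one_iff _).2 (hdB B (Finset.mem_erase.2 ⟨hBA, hB⟩))
        have hvBu : B.valuation u = B.valuation d * B.valuation a₀ := by
          rw [hu, map_mul]
        rcases lt_trichotomy (B.valuation u) 1 with hlt | heq | hgt
        · rw [g3 hlt, hvBu, mul_comm (B.valuation d) (B.valuation a₀), ← mul_assoc,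
            inv_mul_cancel₀ hα0, one_mul]
          exact hvBd
        · have hαinv : (B.valuation a₀)⁻¹ = B.valuation d := by
            refine inv_eq_of_mul_eq_one_left ?_
            rw [← hvBu]
            exact heq
          rw [hαinv]
          calc B.valuation d * B.valuation t₀ ≤ B.valuation d * 1 :=
                mul_le_mul_right (g2 heq) _
            _ = B.valuation d := mul_one _
            _ ≤ 1 := hvBd
        · rw [g1 hgt, mul_one]
          have hα1 : 1 < B.valuation a₀ := by
            by_contra hc
            push_neg at hc
            have : B.valuation u ≤ 1 := by
              rw [hvBu]
              calc B.valuation d * B.valuation a₀ ≤ 1 * 1 :=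
                    mul_le_mul' hvBd hc
                _ = 1 := one_mul _
            exact absurd hgt (not_lt.2 this)
          exact (gz_inv_lt_one hα1).le
      · rw [map_mul, Valuation.map_inv, hV1 hvVu, mul_one]
        exact gz_inv_lt_one hvVa₀
      · rw [map_mul, Valuation.map_inv, hvAa₀, inv_one, one_mul, hA1 hvAu]

end MVDecomp

open MVDecomp in
/-- Let `K` be a field and let `S` and `T` be nonempty finite sets of valuation subrings
of `K`, each consisting of pairwise incomparable valuation subrings.  If the intersection
of all members of `S` equals the intersection of all members of `T` (as subsets of `K`),
then `S = T`.  (Uniqueness of the decomposition of a multi-valuation ring.) -/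
theorem multiValuationRing_decomposition_unique
    {K : Type*} [Field K]
    (S T : Finset (ValuationSubring K))
    (hS : S.Nonempty) (hT : T.Nonempty)
    (hSinc : ∀ A ∈ S, ∀ B ∈ S, A ≠ B → ¬ A ≤ B)
    (hTinc : ∀ A ∈ T, ∀ B ∈ T, A ≠ B → ¬ A ≤ B)
    (h : (⋂ A ∈ S, (A : Set K)) = ⋂ A ∈ T, (A : Set K)) :
    S = T := by
  have hST : ∀ B ∈ T, ∃ A ∈ S, A ≤ B := by
    intro B hB
    refine mv_key S.card S le_rfl hS B ?_
    intro x hx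
    have hx' : x ∈ ⋂ A ∈ S, (A : Set K) := Set.mem_iInter₂.2 hx
    rw [h] at hx'
    exact Set.mem_iInter₂.1 hx' B hB
  have hTS : ∀ A ∈ S, ∃ B ∈ T, B ≤ A := by
    intro A hA
    refine mv_key T.card T le_rfl hT A ?_
    intro x hx
    have hx' : x ∈ ⋂ B ∈ T, (B : Set K) := Set.mem_iInter₂.2 hx
    rw [← h] at hx'
    exact Set.mem_iInter₂.1 hx' A hA
  apply Finset.Subset.antisymm
  · intro A hA
    obtain ⟨B, hB, hBA⟩ := hTS A hA
    obtain ⟨A', hA', hA'B⟩ := hST B hB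
    have hA'A : A' ≤ A := hA'B.trans hBA
    have : A' = A := by
      by_contra hne
      exact hSinc A' hA' A hA hne hA'A
    subst this
    have : A' = B := le_antisymm hA'B hBA
    subst this
    exact hB
  · intro B hB
    obtain ⟨A, hA, hAB⟩ := hST B hB
    obtain ⟨B', hB', hB'A⟩ := hTS A hA
    have hB'B : B' ≤ B := hB'A.trans hAB
    have : B' = B := by
      by_contra hne
      exact hTinc B' hB' B hB hne hB'B
    subst this
    have : B' = A := le_antisymm hB'A hAB
    subst this
    exact hA
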